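/- Let A be a regularised algebra. Then P_{a₁} ∘ μ_{a₂} = μ_{b₁} ∘ (P_{b₂} ⊗ id_A) = μ_{c₁} ∘ (id_A ⊗ P_{c₂}) = μ_{a₁+a₂} whenever a₁+a₂ = b₁+b₂ = c₁+c₂; in particular μ_a depends only on the total area and a ↦ μ_a is continuous. -/

import Mathlib

open CategoryTheory MonoidalCategory

/-- In a regularised algebra,
`P_{a₁} ∘ μ_{a₂} = μ_{b₁} ∘ (P_{b₂} ⊗ id) = μ_{c₁} ∘ (id ⊗ P_{c₂}) = μ_{a₁+a₂}`
whenever `a₁+a₂ = b₁+b₂ = c₁+c₂`; in particular `μ_a` depends only on the total area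
and `a ↦ μ_a` is continuous. -/
theorem stmt2 {C : Type*} [Category C] [MonoidalCategory C]
    [∀ X Y : C, TopologicalSpace (X ⟶ Y)] [∀ X Y : C, T2Space (X ⟶ Y)]
    (hcomp₁ : ∀ {X Y Z : C} (f : X ⟶ Y), Continuous fun g : Y ⟶ Z => f ≫ g)
    (hcomp₂ : ∀ {X Y Z : C} (g : Y ⟶ Z), Continuous fun f : X ⟶ Y => f ≫ g)
    (A : C) (μ : ℝ → ((A ⊗ A) ⟶ A)) (η : ℝ → (𝟙_ C ⟶ A)) (P : ℝ → (A ⟶ A))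
    (hunit : ∀ a₁ a₂ b₁ b₂ : ℝ, 0 < a₁ → 0 < a₂ → 0 < b₁ → 0 < b₂ → a₁ + a₂ = b₁ + b₂ →
      (ρ_ A).inv ≫ (A ◁ η a₂) ≫ μ a₁ = (λ_ A).inv ≫ (η b₂ ▷ A) ≫ μ b₁)
    (hassoc : ∀ a₁ a₂ b₁ b₂ : ℝ, 0 < a₁ → 0 < a₂ → 0 < b₁ → 0 < b₂ → a₁ + a₂ = b₁ + b₂ →
      (A ◁ μ a₂) ≫ μ a₁ = (α_ A A A).inv ≫ (μ b₂ ▷ A) ≫ μ b₁)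
    (hP : ∀ a₁ a₂ : ℝ, 0 < a₁ → 0 < a₂ →
      P (a₁ + a₂) = (ρ_ A).inv ≫ (A ◁ η a₂) ≫ μ a₁)
    (hPcont : ContinuousOn P (Set.Ioi 0))
    (hPlim : Filter.Tendsto P (nhdsWithin 0 (Set.Ioi 0)) (nhds (𝟙 A))) :
    (∀ a₁ a₂ b₁ b₂ c₁ c₂ : ℝ, 0 < a₁ → 0 < a₂ → 0 < b₁ → 0 < b₂ → 0 < c₁ → 0 < c₂ →
      a₁ + a₂ = b₁ + b₂ → b₁ + b₂ = c₁ + c₂ →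
      μ a₂ ≫ P a₁ = (P b₂ ▷ A) ≫ μ b₁ ∧
      (P b₂ ▷ A) ≫ μ b₁ = (A ◁ P c₂) ≫ μ c₁ ∧
      (A ◁ P c₂) ≫ μ c₁ = μ (a₁ + a₂)) ∧
    ContinuousOn μ (Set.Ioi 0) := by
  -- the unit in the other (left-unitor) form
  have hPleft : ∀ t s : ℝ, 0 < t → 0 < s →
      P (t + s) = (λ_ A).inv ≫ (η s ▷ A) ≫ μ t := by
    intro t s ht hs
    rw [hP t s ht hs, hunit t s t s ht hs ht hs rfl]
  -- Key lemma 1 : μ a₂ ≫ P a₁ = (P b₂ ▷ A) ≫ μ b₁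
  have key1 : ∀ a₁ a₂ b₁ b₂ : ℝ, 0 < a₁ → 0 < a₂ → 0 < b₁ → 0 < b₂ →
      a₁ + a₂ = b₁ + b₂ → μ a₂ ≫ P a₁ = (P b₂ ▷ A) ≫ μ b₁ := by
    intro a₁ a₂ b₁ b₂ ha₁ ha₂ hb₁ hb₂ hsum
    have hmin₁ := min_le_left a₁ b₂
    have hmin₂ := min_le_right a₁ b₂
    have hminpos : 0 < min a₁ b₂ := lt_min ha₁ hb₂
    set s : ℝ := min a₁ b₂ / 2 with hs_def
    have hs : 0 < s := by positivity
    set t : ℝ := a₁ - s with ht_def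
    set u : ℝ := b₂ - s with hu_def
    have ht : 0 < t := by simp only [ht_def, hs_def]; linarith
    have hu : 0 < u := by simp only [hu_def, hs_def]; linarith
    have hPa₁ : P a₁ = (λ_ A).inv ≫ (η s ▷ A) ≫ μ t := by
      have := hPleft t s ht hs
      rwa [show t + s = a₁ by simp [ht_def]] at this
    have hPb₂ : P b₂ = (λ_ A).inv ≫ (η s ▷ A) ≫ μ u := by
      have := hPleft u s hu hs
      rwa [show u + s = b₂ by simp [hu_def]] at this
    have hass : (A ◁ μ a₂) ≫ μ t = (α_ A A A).inv ≫ (μ u ▷ A) ≫ μ b₁ :=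
      hassoc t a₂ b₁ u ht ha₂ hb₁ hu (by simp only [ht_def, hu_def]; linarith)
    calc μ a₂ ≫ P a₁
        = μ a₂ ≫ (λ_ A).inv ≫ (η s ▷ A) ≫ μ t := by rw [hPa₁]
      _ = (λ_ (A ⊗ A)).inv ≫ (𝟙_ C ◁ μ a₂) ≫ (η s ▷ A) ≫ μ t := by
          rw [leftUnitor_inv_naturality_assoc]
      _ = (λ_ (A ⊗ A)).inv ≫ (η s ▷ (A ⊗ A)) ≫ (A ◁ μ a₂) ≫ μ t := by
          rw [whisker_exchange_assoc]
      _ = (λ_ (A ⊗ A)).inv ≫ (η s ▷ (A ⊗ A)) ≫ (α_ A A A).inv ≫ (μ u ▷ A) ≫ μ b₁ := by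
          rw [hass]
      _ = (λ_ (A ⊗ A)).inv ≫ (α_ (𝟙_ C) A A).inv ≫ ((η s ▷ A) ▷ A) ≫ (μ u ▷ A) ≫ μ b₁ := by
          rw [associator_inv_naturality_left_assoc]
      _ = ((λ_ A).inv ▷ A) ≫ ((η s ▷ A) ▷ A) ≫ (μ u ▷ A) ≫ μ b₁ := by
          rw [← leftUnitor_inv_whiskerRight_assoc]
      _ = (P b₂ ▷ A) ≫ μ b₁ := by
          rw [hPb₂]; simp [comp_whiskerRight]
  -- Key lemma 2 : μ a₂ ≫ P a₁ = (A ◁ P c₂) ≫ μ c₁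
  have key2 : ∀ a₁ a₂ c₁ c₂ : ℝ, 0 < a₁ → 0 < a₂ → 0 < c₁ → 0 < c₂ →
      a₁ + a₂ = c₁ + c₂ → μ a₂ ≫ P a₁ = (A ◁ P c₂) ≫ μ c₁ := by
    intro a₁ a₂ c₁ c₂ ha₁ ha₂ hc₁ hc₂ hsum
    have hmin₁ := min_le_left a₁ c₂
    have hmin₂ := min_le_right a₁ c₂
    have hminpos : 0 < min a₁ c₂ := lt_min ha₁ hc₂
    set s : ℝ := min a₁ c₂ / 2 with hs_def
    have hs : 0 < s := by positivity
    set t : ℝ := a₁ - s with ht_def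
    set u : ℝ := c₂ - s with hu_def
    have ht : 0 < t := by simp only [ht_def, hs_def]; linarith
    have hu : 0 < u := by simp only [hu_def, hs_def]; linarith
    have hPa₁ : P a₁ = (ρ_ A).inv ≫ (A ◁ η s) ≫ μ t := by
      have := hP t s ht hs
      rwa [show t + s = a₁ by simp [ht_def]] at this
    have hPc₂ : P c₂ = (ρ_ A).inv ≫ (A ◁ η s) ≫ μ u := by
      have := hP u s hu hs
      rwa [show u + s = c₂ by simp [hu_def]] at this
    have hass : (μ a₂ ▷ A) ≫ μ t = (α_ A A A).hom ≫ (A ◁ μ u) ≫ μ c₁ := by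
      have h := hassoc c₁ u t a₂ hc₁ hu ht ha₂ (by simp only [ht_def, hu_def]; linarith)
      rw [h]; simp
    calc μ a₂ ≫ P a₁
        = μ a₂ ≫ (ρ_ A).inv ≫ (A ◁ η s) ≫ μ t := by rw [hPa₁]
      _ = (ρ_ (A ⊗ A)).inv ≫ (μ a₂ ▷ 𝟙_ C) ≫ (A ◁ η s) ≫ μ t := by
          rw [rightUnitor_inv_naturality_assoc]
      _ = (ρ_ (A ⊗ A)).inv ≫ ((A ⊗ A) ◁ η s) ≫ (μ a₂ ▷ A) ≫ μ t := by
          rw [← whisker_exchange_assoc]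
      _ = (ρ_ (A ⊗ A)).inv ≫ ((A ⊗ A) ◁ η s) ≫ (α_ A A A).hom ≫ (A ◁ μ u) ≫ μ c₁ := by
          rw [hass]
      _ = (ρ_ (A ⊗ A)).inv ≫ (α_ A A (𝟙_ C)).hom ≫ (A ◁ (A ◁ η s)) ≫ (A ◁ μ u) ≫ μ c₁ := by
          rw [associator_naturality_right_assoc]
      _ = (A ◁ (ρ_ A).inv) ≫ (A ◁ (A ◁ η s)) ≫ (A ◁ μ u) ≫ μ c₁ := by
          rw [← whiskerLeft_rightUnitor_inv_assoc]
      _ = (A ◁ P c₂) ≫ μ c₁ := by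
          rw [hPc₂]; simp [MonoidalCategory.whiskerLeft_comp]
  -- μ depends only on the total area, in the form μ (a₁+a₂) = μ a₂ ≫ P a₁
  have wellE : ∀ a₁ a₂ a₁' a₂' : ℝ, 0 < a₁ → 0 < a₂ → 0 < a₁' → 0 < a₂' →
      a₁ + a₂ = a₁' + a₂' → μ a₂ ≫ P a₁ = μ a₂' ≫ P a₁' := by
    intro a₁ a₂ a₁' a₂' h1 h2 h3 h4 hsum
    rw [key1 a₁ a₂ a₂' a₁' h1 h2 h4 h3 (by linarith),
      ← key1 a₁' a₂' a₂' a₁' h3 h4 h4 h3 (by linarith)]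
  have hE : ∀ a₁ a₂ : ℝ, 0 < a₁ → 0 < a₂ → μ (a₁ + a₂) = μ a₂ ≫ P a₁ := by
    intro a₁ a₂ ha₁ ha₂
    set T : ℝ := a₁ + a₂ with hT_def
    have hT : 0 < T := by positivity
    -- both sides are the limit of ε ↦ μ T ≫ P ε as ε → 0⁺
    have l1 : Filter.Tendsto (fun ε => μ T ≫ P ε) (nhdsWithin 0 (Set.Ioi 0))
        (nhds (μ T)) := by
      have := ((hcomp₁ (μ T)).tendsto (𝟙 A)).comp hPlim
      simpa [Function.comp_def] using this
    have l2 : Filter.Tendsto (fun ε => μ T ≫ P ε) (nhdsWithin 0 (Set.Ioi 0))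
        (nhds (μ a₂ ≫ P a₁)) := by
      have heq : ∀ᶠ ε in nhdsWithin 0 (Set.Ioi 0),
          μ T ≫ P ε = μ a₂ ≫ P (a₁ + ε) := by
        filter_upwards [self_mem_nhdsWithin] with ε (hε : ε ∈ Set.Ioi 0)
        exact wellE ε T (a₁ + ε) a₂ hε hT (by have := Set.mem_Ioi.mp hε; linarith) ha₂ (by ring)
      rw [Filter.tendsto_congr' heq]
      have hmap : Filter.Tendsto (fun ε : ℝ => a₁ + ε) (nhdsWithin 0 (Set.Ioi 0))
          (nhdsWithin a₁ (Set.Ioi 0)) := by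
        apply tendsto_nhdsWithin_of_tendsto_nhds_of_eventually_within
        · have h0 : Filter.Tendsto (fun ε : ℝ => a₁ + ε) (nhds 0) (nhds (a₁ + 0)) :=
            (continuous_const.add continuous_id).tendsto 0
          simpa using h0.mono_left nhdsWithin_le_nhds
        · filter_upwards [self_mem_nhdsWithin] with ε (hε : ε ∈ Set.Ioi 0)
          exact Set.mem_Ioi.mpr (by simp at hε ⊢; linarith)
      have hPat : Filter.Tendsto P (nhdsWithin a₁ (Set.Ioi 0)) (nhds (P a₁)) :=
        hPcont a₁ ha₁
      exact ((hcomp₁ (μ a₂)).tendsto (P a₁)).comp (hPat.comp hmap)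
    exact tendsto_nhds_unique l1 l2
  constructor
  · intro a₁ a₂ b₁ b₂ c₁ c₂ ha₁ ha₂ hb₁ hb₂ hc₁ hc₂ hab hbc
    refine ⟨key1 a₁ a₂ b₁ b₂ ha₁ ha₂ hb₁ hb₂ hab, ?_, ?_⟩
    · rw [← key1 a₁ a₂ b₁ b₂ ha₁ ha₂ hb₁ hb₂ hab,
        key2 a₁ a₂ c₁ c₂ ha₁ ha₂ hc₁ hc₂ (by linarith)]
    · rw [← key2 a₁ a₂ c₁ c₂ ha₁ ha₂ hc₁ hc₂ (by linarith), hE a₁ a₂ ha₁ ha₂]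
  · intro T hT
    have hT' : (0 : ℝ) < T := hT
    have hhalf : 0 < T / 2 := by linarith
    have hmemnhds : Set.Ioi (T / 2) ∈ nhds T := isOpen_Ioi.mem_nhds (Set.mem_Ioi.mpr (by linarith))
    have heq : ∀ᶠ x in nhdsWithin T (Set.Ioi 0),
        μ x = μ (T / 2) ≫ P (x - T / 2) := by
      filter_upwards [nhdsWithin_le_nhds hmemnhds] with x (hx : x ∈ Set.Ioi (T / 2))
      have hx' : 0 < x - T / 2 := by simp at hx; linarith
      have := hE (x - T / 2) (T / 2) hx' hhalf
      rwa [show x - T / 2 + T / 2 = x by ring] at this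
    have hmap : Filter.Tendsto (fun x : ℝ => x - T / 2) (nhdsWithin T (Set.Ioi 0))
        (nhdsWithin (T / 2) (Set.Ioi 0)) := by
      apply tendsto_nhdsWithin_of_tendsto_nhds_of_eventually_within
      · have : Filter.Tendsto (fun x : ℝ => x - T / 2) (nhds T) (nhds (T - T / 2)) :=
          Filter.tendsto_id.sub tendsto_const_nhds
        rw [show T - T / 2 = T / 2 by ring] at this
        exact this.mono_left nhdsWithin_le_nhds
      · filter_upwards [nhdsWithin_le_nhds hmemnhds] with x (hx : x ∈ Set.Ioi (T / 2))
        simp at hx ⊢; linarith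
    have hlim : Filter.Tendsto (fun x : ℝ => μ (T / 2) ≫ P (x - T / 2))
        (nhdsWithin T (Set.Ioi 0)) (nhds (μ (T / 2) ≫ P (T / 2))) :=
      by
      have hPat : Filter.Tendsto P (nhdsWithin (T / 2) (Set.Ioi 0)) (nhds (P (T / 2))) :=
        hPcont _ hhalf
      exact ((hcomp₁ (μ (T / 2))).tendsto (P (T / 2))).comp (hPat.comp hmap)
    have hval : μ (T / 2) ≫ P (T / 2) = μ T := by
      rw [← hE (T / 2) (T / 2) hhalf hhalf]; norm_num
    rw [ContinuousWithinAt]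
    rw [Filter.tendsto_congr' heq, ← hval]
    exact hlim
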